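/- Let d ≥ 0, α ∈ (0,1], and let C : ℝ^d → ℝ^d satisfy ‖C(x) − x‖₂² ≤ (1 − α)·‖x‖₂² for all x ∈ ℝ^d. Let (v_t)_{t≥0} be a sequence in ℝ^d with ‖v_t‖₂² ≤ d for all t, and define (e_t)_{t≥0} by e_0 = 0 and e_{t+1} = v_t + e_t − C(v_t + e_t). Then for every ρ > 0 with (1 − α)(1 + ρ) < 1 and every t ≥ 0: ‖e_t‖₂² ≤ ( (1 − α)·(1 + 1/ρ)·d ) / ( 1 − (1 − α)(1 + ρ) ). -/
import Mathlib


/-- (Lemma 2 of the paper's supplementary material, deterministic form.)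
For an `α`-approximate compressor `C` (`‖C x - x‖² ≤ (1-α)‖x‖²`), inputs with `‖v_t‖² ≤ d`,
and the error-feedback residual `e_0 = 0`, `e_{t+1} = v_t + e_t - C(v_t + e_t)`, we have for
every `ρ > 0` with `(1-α)(1+ρ) < 1` and every `t`:
`‖e_t‖² ≤ (1-α)(1 + 1/ρ) d / (1 - (1-α)(1+ρ))`. -/
theorem stmt_11 (d : ℕ) (α : ℝ) (hα : α ∈ Set.Ioc (0 : ℝ) 1)
    (C : EuclideanSpace ℝ (Fin d) → EuclideanSpace ℝ (Fin d))
    (hC : ∀ x, ‖C x - x‖ ^ 2 ≤ (1 - α) * ‖x‖ ^ 2)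
    (v : ℕ → EuclideanSpace ℝ (Fin d)) (hv : ∀ t, ‖v t‖ ^ 2 ≤ (d : ℝ))
    (e : ℕ → EuclideanSpace ℝ (Fin d)) (he0 : e 0 = 0)
    (he : ∀ t, e (t + 1) = v t + e t - C (v t + e t)) :
    ∀ ρ > (0 : ℝ), (1 - α) * (1 + ρ) < 1 → ∀ t,
      ‖e t‖ ^ 2 ≤ (1 - α) * (1 + 1 / ρ) * d / (1 - (1 - α) * (1 + ρ)) := by
  obtain ⟨hα0, hα1⟩ := hα
  intro ρ hρ hlt
  have hβ0 : (0:ℝ) ≤ 1 - α := by linarith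
  have hden : (0:ℝ) < 1 - (1 - α) * (1 + ρ) := by linarith
  have hd0 : (0:ℝ) ≤ (d:ℝ) := Nat.cast_nonneg d
  set B : ℝ := (1 - α) * (1 + 1 / ρ) * d / (1 - (1 - α) * (1 + ρ)) with hBdef
  have hBnn : 0 ≤ B := by
    apply div_nonneg _ (le_of_lt hden)
    have : (0:ℝ) ≤ 1 + 1/ρ := by positivity
    positivity
  have hBeq : B * (1 - (1 - α) * (1 + ρ)) = (1 - α) * (1 + 1/ρ) * d := by
    rw [hBdef, div_mul_cancel₀]
    exact ne_of_gt hden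
  intro t
  induction t with
  | zero => rw [he0]; simpa using hBnn
  | succ t ih =>
    have h1 : ‖e (t+1)‖^2 ≤ (1 - α) * ‖v t + e t‖^2 := by
      rw [he t]
      have h := hC (v t + e t)
      rwa [← norm_neg, neg_sub] at h
    have hρ' : ρ * (1/ρ) = 1 := by field_simp
    have hy : ‖v t + e t‖^2 ≤ (1 + 1/ρ) * ‖v t‖^2 + (1 + ρ) * ‖e t‖^2 := by
      have h := norm_add_le (v t) (e t)
      have key : (0:ℝ) ≤ (‖v t‖ - ρ * ‖e t‖)^2 / ρ := by positivity
      have expand : (‖v t‖ - ρ * ‖e t‖)^2 / ρ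
          = 1/ρ * ‖v t‖^2 + ρ * ‖e t‖^2 - 2 * ‖v t‖ * ‖e t‖ := by
        field_simp; ring
      nlinarith [norm_nonneg (v t), norm_nonneg (e t), norm_nonneg (v t + e t)]
    have hvd := hv t
    have h3 : ‖e (t+1)‖^2 ≤ (1 - α) * ((1 + 1/ρ) * (d:ℝ) + (1 + ρ) * B) := by
      have := mul_le_mul_of_nonneg_left hy hβ0
      have h4 : (1 + 1/ρ) * ‖v t‖^2 + (1 + ρ) * ‖e t‖^2
          ≤ (1 + 1/ρ) * (d:ℝ) + (1 + ρ) * B := by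
        have hr1 : (0:ℝ) ≤ 1 + 1/ρ := by positivity
        have hr2 : (0:ℝ) ≤ 1 + ρ := by linarith
        gcongr
      calc ‖e (t+1)‖^2 ≤ (1 - α) * ‖v t + e t‖^2 := h1
        _ ≤ (1 - α) * ((1 + 1/ρ) * ‖v t‖^2 + (1 + ρ) * ‖e t‖^2) := this
        _ ≤ (1 - α) * ((1 + 1/ρ) * (d:ℝ) + (1 + ρ) * B) :=
            mul_le_mul_of_nonneg_left h4 hβ0
    nlinarith [h3, hBeq]
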